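/- arXiv:1305.1914 — 4 statements merged into one kernel-verified Lean document; each statement's English description precedes it below -/
import Mathlib

section
/- Let A be an artinian object of an abelian category and f : A → A an endomorphism. Then there exists N such that for all n ≥ N, the join of the kernel subobject of f^n and the image subobject of f^n is all of A: kernelSubobject(f^n) ⊔ imageSubobject(f^n) = ⊤ in the subobject lattice of A. -/
open CategoryTheory CategoryTheory.Limits

/-- Fitting-type lemma: if `Im (g ≫ g) = Im g`, then `Ker g ⊔ Im g = ⊤`. -/
lemma aux_kernel_sup_image_eq_top {𝒜 : Type*} [Category 𝒜] [Abelian 𝒜] {A : 𝒜}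
    (g : A ⟶ A) (h : imageSubobject (g ≫ g) = imageSubobject g) :
    kernelSubobject g ⊔ imageSubobject g = ⊤ := by
  set I := imageSubobject g with hI
  set a : (I : 𝒜) ⟶ A := I.arrow with ha
  set ee : A ⟶ (I : 𝒜) := factorThruImageSubobject g with hee
  have fac : ee ≫ a = g := imageSubobject_arrow_comp g
  -- the map `g ≫ ee : A ⟶ I` is epi, since `Im g² = Im g`
  have hu : Epi (g ≫ ee) := by
    have hw : (factorThruImageSubobject (g ≫ g) ≫
          (Subobject.isoOfEq _ _ h).hom) ≫ a = (g ≫ ee) ≫ a := by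
      simp only [Category.assoc, ha]
      rw [Subobject.isoOfEq_hom, Subobject.ofLE_arrow, imageSubobject_arrow_comp,
        fac]
    have : factorThruImageSubobject (g ≫ g) ≫ (Subobject.isoOfEq _ _ h).hom = g ≫ ee :=
      (cancel_mono a).mp hw
    rw [← this]
    exact epi_comp _ _
  -- consider the cokernel of the arrow of `Ker g ⊔ Im g`
  set S := kernelSubobject g ⊔ I with hS
  set s : (S : 𝒜) ⟶ A := S.arrow with hs
  set c : A ⟶ cokernel s := cokernel.π s with hc
  have hsc : s ≫ c = 0 := cokernel.condition s
  have hac : a ≫ c = 0 := by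
    rw [ha, ← Subobject.ofLE_arrow (le_sup_right : I ≤ S), Category.assoc, ← hs, hsc,
      comp_zero]
  have hkc : kernel.ι g ≫ c = 0 := by
    rw [← kernelSubobject_arrow' g, Category.assoc,
      ← Subobject.ofLE_arrow (le_sup_left : kernelSubobject g ≤ S), Category.assoc, ← hs,
      hsc, comp_zero, comp_zero]
  -- `c` factors through `ee`, since `ee` is the cokernel of its kernel
  have hkee : kernel.ι ee ≫ c = 0 := by
    have h1 : kernel.ι ee ≫ g = 0 := by rw [← fac, ← Category.assoc, kernel.condition, zero_comp]
    have h2 : kernel.lift g (kernel.ι ee) h1 ≫ kernel.ι g = kernel.ι ee := kernel.lift_ι _ _ _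
    rw [← h2, Category.assoc, hkc, comp_zero]
  obtain ⟨c', hc'⟩ := CokernelCofork.IsColimit.desc'
    (Abelian.epiIsCokernelOfKernel _ (kernelIsKernel ee)) c hkee
  have hc'ee : ee ≫ c' = c := hc'
  have hc'0 : c' = 0 := by
    have : (g ≫ ee) ≫ c' = 0 := by
      rw [Category.assoc, hc'ee, ← fac, Category.assoc, hac, comp_zero]
    exact (cancel_epi (g ≫ ee)).mp (by rw [this, comp_zero])
  have hc0 : c = 0 := by rw [← hc'ee, hc'0, comp_zero]
  have : Epi s := Abelian.epi_of_cokernel_π_eq_zero _ hc0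
  have : IsIso s := isIso_of_mono_of_epi s
  exact Subobject.eq_top_of_isIso_arrow S

/-- If `A` is an artinian object of an abelian category (its subobject lattice
satisfies the descending chain condition) and `f : A ⟶ A` is an endomorphism, then
for all sufficiently large `n`, `Ker fⁿ ⊔ Im fⁿ = ⊤` in the subobject lattice of `A`. -/
theorem kernel_sup_image_eq_top_of_artinianObject {𝒜 : Type*} [Category 𝒜] [Abelian 𝒜]
    (A : 𝒜) [IsArtinianObject A] (f : End A) :
    ∃ N : ℕ, ∀ n ≥ N,
      kernelSubobject ((f ^ n : End A) : A ⟶ A) ⊔ imageSubobject ((f ^ n : End A) : A ⟶ A) = ⊤ := by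
  -- the images of `f ^ n` form a descending chain, which stabilizes
  have anti : ∀ n m : ℕ, n ≤ m →
      imageSubobject ((f ^ m : End A) : A ⟶ A) ≤ imageSubobject ((f ^ n : End A) : A ⟶ A) := by
    intro n m hnm
    have : (f ^ m : End A) = f ^ n * f ^ (m - n) := by
      rw [← pow_add]; congr 1; omega
    rw [this, End.mul_def]
    exact imageSubobject_comp_le _ _
  have wf : WellFounded ((· > ·) : (Subobject A)ᵒᵈ → (Subobject A)ᵒᵈ → Prop) :=
    wellFounded_lt (α := Subobject A)
  obtain ⟨N, hN⟩ := wellFoundedGT_iff_monotone_chain_condition.mp ⟨wf⟩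
    ⟨fun n => OrderDual.toDual (imageSubobject ((f ^ n : End A) : A ⟶ A)),
     fun n m hnm => anti n m hnm⟩
  refine ⟨N, fun n hn => ?_⟩
  apply aux_kernel_sup_image_eq_top
  have h2n : imageSubobject ((f ^ (2 * n) : End A) : A ⟶ A)
      = imageSubobject ((f ^ n : End A) : A ⟶ A) := by
    have e1 := hN (2 * n) (by omega)
    have e2 := hN n hn
    exact (OrderDual.toDual.injective (e1.symm.trans e2) : _)
  have : ((f ^ n : End A) : A ⟶ A) ≫ ((f ^ n : End A) : A ⟶ A)
      = ((f ^ (2 * n) : End A) : A ⟶ A) := by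
    rw [two_mul, pow_add, End.mul_def]
  rw [this, h2n]
end

section
/- (Fitting Lemma) Let A be an object of finite length in an abelian category (i.e., A is both noetherian and artinian) and f : A → A an endomorphism. Then there exists N such that for all n ≥ N, the subobjects kernelSubobject(f^n) and imageSubobject(f^n) are complements in the subobject lattice of A (their meet is ⊥ and their join is ⊤); consequently A is isomorphic to the direct sum Ker f^n ⊕ Im f^n via the morphism induced by the two inclusions. -/
open CategoryTheory CategoryTheory.Limits

lemma fitting_core {𝒜 : Type*} [Category 𝒜] [Abelian 𝒜] {A : 𝒜} (g : A ⟶ A)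
    (hker : ∀ {T : 𝒜} (t : T ⟶ A), t ≫ (g ≫ g) = 0 → t ≫ g = 0)
    (him : imageSubobject g ≤ imageSubobject (g ≫ g)) :
    IsCompl (kernelSubobject g) (imageSubobject g) ∧
    IsIso (biprod.desc (kernelSubobject g).arrow (imageSubobject g).arrow) := by
  have hwa : Subobject.ofLE _ _ him ≫ (imageSubobject (g ≫ g)).arrow =
      (imageSubobject g).arrow := Subobject.ofLE_arrow him
  -- `i ≫ g` is a monomorphism
  have hmono_ig : Mono ((imageSubobject g).arrow ≫ g) := by
    apply Preadditive.mono_of_cancel_zero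
    intro T t ht
    obtain ⟨T', π, hπ, c, hc⟩ :=
      surjective_up_to_refinements_of_epi (factorThruImageSubobject (g ≫ g))
        (t ≫ Subobject.ofLE _ _ him)
    have h1 : π ≫ t ≫ (imageSubobject g).arrow = c ≫ (g ≫ g) := by
      have e := congrArg (· ≫ (imageSubobject (g ≫ g)).arrow) hc
      simpa [Category.assoc, hwa, imageSubobject_arrow_comp] using e
    have h2 : (c ≫ g) ≫ (g ≫ g) = 0 := by
      have e1 : π ≫ t ≫ (imageSubobject g).arrow ≫ g = c ≫ g ≫ g ≫ g := by
        simpa [Category.assoc] using congrArg (· ≫ g) h1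
      have e2 : π ≫ t ≫ (imageSubobject g).arrow ≫ g = 0 := by
        simpa using congrArg (π ≫ ·) ht
      simp only [Category.assoc]
      rw [← e1, e2]
    have h3 : c ≫ g ≫ g = 0 := by simpa using hker (c ≫ g) h2
    have h4 : π ≫ t ≫ (imageSubobject g).arrow = 0 := by rw [h1, h3]
    have h5 : π ≫ t = 0 := by
      apply zero_of_comp_mono (imageSubobject g).arrow
      simpa [Category.assoc] using h4
    exact zero_of_epi_comp π h5
  have hmono : Mono (biprod.desc (kernelSubobject g).arrow (imageSubobject g).arrow) := by
    apply Preadditive.mono_of_cancel_zero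
    intro T t ht
    have hsum : (t ≫ biprod.fst) ≫ (kernelSubobject g).arrow
        + (t ≫ biprod.snd) ≫ (imageSubobject g).arrow = 0 := by
      rw [← biprod.lift_desc]
      have : biprod.lift (t ≫ biprod.fst) (t ≫ biprod.snd) = t := by
        apply biprod.hom_ext <;> simp
      rw [this, ht]
    have hb : (t ≫ biprod.snd) ≫ ((imageSubobject g).arrow ≫ g) = 0 := by
      have e := congrArg (· ≫ g) hsum
      simpa [Preadditive.add_comp, Category.assoc, kernelSubobject_arrow_comp] using e
    have hb0 : t ≫ biprod.snd = 0 := zero_of_comp_mono _ hb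
    have ha0 : t ≫ biprod.fst = 0 := by
      apply zero_of_comp_mono (kernelSubobject g).arrow
      rw [hb0, zero_comp, add_zero] at hsum
      exact hsum
    apply biprod.hom_ext <;> simp [ha0, hb0]
  have hepi : Epi (biprod.desc (kernelSubobject g).arrow (imageSubobject g).arrow) := by
    apply Preadditive.epi_of_cancel_zero
    intro R h hh
    have hkh : (kernelSubobject g).arrow ≫ h = 0 := by
      have := congrArg (biprod.inl ≫ ·) hh
      simpa using this
    have hih : (imageSubobject g).arrow ≫ h = 0 := by
      have := congrArg (biprod.inr ≫ ·) hh
      simpa using this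
    have hgh : g ≫ h = 0 := by
      rw [← imageSubobject_arrow_comp g, Category.assoc, hih, comp_zero]
    obtain ⟨A', π, hπ, c, hc⟩ :=
      surjective_up_to_refinements_of_epi (factorThruImageSubobject (g ≫ g))
        (factorThruImageSubobject g ≫ Subobject.ofLE _ _ him)
    have h1 : π ≫ g = c ≫ (g ≫ g) := by
      have e := congrArg (· ≫ (imageSubobject (g ≫ g)).arrow) hc
      simpa [Category.assoc, hwa, imageSubobject_arrow_comp] using e
    have h2 : (π - c ≫ g) ≫ g = 0 := by
      rw [Preadditive.sub_comp, h1]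
      simp
    have h3 : π ≫ h = 0 := by
      have hfac := kernelSubobject_factors g (π - c ≫ g) h2
      have heq : (kernelSubobject g).factorThru _ hfac ≫ (kernelSubobject g).arrow
          = π - c ≫ g := Subobject.factorThru_arrow _ _ _
      have e : (π - c ≫ g) ≫ h = 0 := by
        rw [← heq, Category.assoc, hkh, comp_zero]
      rw [Preadditive.sub_comp, Category.assoc, hgh, comp_zero, sub_zero] at e
      exact e
    exact zero_of_epi_comp π h3
  have hiso : IsIso (biprod.desc (kernelSubobject g).arrow (imageSubobject g).arrow) :=
    isIso_of_mono_of_epi _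
  refine ⟨?_, hiso⟩
  have hinf : kernelSubobject g ⊓ imageSubobject g = ⊥ := by
    have ha : Subobject.ofLE _ _ (inf_le_left : kernelSubobject g ⊓ imageSubobject g ≤ _)
        ≫ (kernelSubobject g).arrow = (kernelSubobject g ⊓ imageSubobject g).arrow :=
      Subobject.ofLE_arrow _
    have hb : Subobject.ofLE _ _ (inf_le_right : kernelSubobject g ⊓ imageSubobject g ≤ _)
        ≫ (imageSubobject g).arrow = (kernelSubobject g ⊓ imageSubobject g).arrow :=
      Subobject.ofLE_arrow _
    have hz : biprod.lift (Subobject.ofLE _ _ inf_le_left)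
        (-(Subobject.ofLE _ _ inf_le_right)) ≫
        biprod.desc (kernelSubobject g).arrow (imageSubobject g).arrow = 0 := by
      rw [biprod.lift_desc, ha, Preadditive.neg_comp, hb, add_neg_cancel]
    have hz0 : biprod.lift (Subobject.ofLE _ _ inf_le_left)
        (-(Subobject.ofLE _ _ inf_le_right)) = (0 : _ ⟶ _) := zero_of_comp_mono _ hz
    have harr : (kernelSubobject g ⊓ imageSubobject g).arrow = 0 := by
      rw [← ha]
      have e : Subobject.ofLE _ _ (inf_le_left : kernelSubobject g ⊓ imageSubobject g ≤ _)
          = 0 := by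
        have := congrArg (· ≫ biprod.fst) hz0
        simpa using this
      rw [e, zero_comp]
    rw [← Subobject.mk_arrow (kernelSubobject g ⊓ imageSubobject g),
      Subobject.mk_eq_bot_iff_zero]
    exact harr
  have hsup : kernelSubobject g ⊔ imageSubobject g = ⊤ := by
    have h1 : biprod.desc (kernelSubobject g).arrow (imageSubobject g).arrow =
        biprod.desc (Subobject.ofLE _ _ (le_sup_left : kernelSubobject g ≤ _))
          (Subobject.ofLE _ _ (le_sup_right : imageSubobject g ≤ _)) ≫
          (kernelSubobject g ⊔ imageSubobject g).arrow := by
      apply biprod.hom_ext' <;> simp [Subobject.ofLE_arrow]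
    rw [h1] at hepi
    haveI := hepi
    have : Epi ((kernelSubobject g ⊔ imageSubobject g).arrow) :=
      epi_of_epi (biprod.desc (Subobject.ofLE _ _ le_sup_left)
        (Subobject.ofLE _ _ le_sup_right)) _
    have : IsIso ((kernelSubobject g ⊔ imageSubobject g).arrow) := isIso_of_mono_of_epi _
    exact Subobject.eq_top_of_isIso_arrow _
  exact IsCompl.of_eq hinf hsup

/-- (Fitting Lemma) If `A` is an object of finite length in an abelian category
(i.e. both noetherian and artinian) and `f : A ⟶ A` is an endomorphism, then for all
sufficiently large `n` the subobjects `Ker fⁿ` and `Im fⁿ` are complements in the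
subobject lattice of `A`, and the morphism `Ker fⁿ ⊞ Im fⁿ ⟶ A` induced by the two
inclusions is an isomorphism, so `A ≅ Ker fⁿ ⊕ Im fⁿ`. -/
theorem fitting_lemma {𝒜 : Type*} [Category 𝒜] [Abelian 𝒜]
    (A : 𝒜) [IsNoetherianObject A] [IsArtinianObject A] (f : End A) :
    ∃ N : ℕ, ∀ n ≥ N,
      IsCompl (kernelSubobject ((f ^ n : End A) : A ⟶ A))
        (imageSubobject ((f ^ n : End A) : A ⟶ A)) ∧
      IsIso (biprod.desc (kernelSubobject ((f ^ n : End A) : A ⟶ A)).arrow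
        (imageSubobject ((f ^ n : End A) : A ⟶ A)).arrow) := by
  have hpow : ∀ a b : ℕ, ((f ^ (a + b) : End A) : A ⟶ A) =
      ((f ^ b : End A) : A ⟶ A) ≫ ((f ^ a : End A) : A ⟶ A) := by
    intro a b
    rw [pow_add]
    rfl
  let kseq : ℕ →o Subobject A :=
    ⟨fun n => kernelSubobject ((f ^ n : End A) : A ⟶ A), by
      apply monotone_nat_of_le_succ
      intro n
      have e : ((f ^ (n + 1) : End A) : A ⟶ A) =
          ((f ^ n : End A) : A ⟶ A) ≫ ((f ^ 1 : End A) : A ⟶ A) := by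
        rw [add_comm]; exact hpow 1 n
      rw [e]
      exact kernelSubobject_comp_le _ _⟩
  let iseq : ℕ →o (Subobject A)ᵒᵈ :=
    ⟨fun n => OrderDual.toDual (imageSubobject ((f ^ n : End A) : A ⟶ A)), by
      apply monotone_nat_of_le_succ
      intro n
      have e : ((f ^ (n + 1) : End A) : A ⟶ A) =
          ((f ^ 1 : End A) : A ⟶ A) ≫ ((f ^ n : End A) : A ⟶ A) := hpow n 1
      show imageSubobject ((f ^ (n + 1) : End A) : A ⟶ A) ≤
        imageSubobject ((f ^ n : End A) : A ⟶ A)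
      rw [e]
      exact imageSubobject_comp_le _ _⟩
  obtain ⟨N₁, hN₁⟩ :=
    wellFoundedGT_iff_monotone_chain_condition.1 (inferInstance : WellFoundedGT (Subobject A)) kseq
  obtain ⟨N₂, hN₂⟩ :=
    wellFoundedGT_iff_monotone_chain_condition.1
      (show WellFoundedGT (Subobject A)ᵒᵈ from
        inferInstance) iseq
  refine ⟨max N₁ N₂, fun n hn => ?_⟩
  have hn₁ : N₁ ≤ n := le_trans (le_max_left _ _) hn
  have hn₂ : N₂ ≤ n := le_trans (le_max_right _ _) hn
  have hker_eq : kernelSubobject ((f ^ (n + n) : End A) : A ⟶ A) =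
      kernelSubobject ((f ^ n : End A) : A ⟶ A) :=
    (hN₁ (n + n) (le_trans hn₁ (Nat.le_add_right n n))).symm.trans (hN₁ n hn₁)
  have him_eq : imageSubobject ((f ^ n : End A) : A ⟶ A) =
      imageSubobject ((f ^ (n + n) : End A) : A ⟶ A) := by
    have e1 := hN₂ n hn₂
    have e2 := hN₂ (n + n) (le_trans hn₂ (Nat.le_add_right n n))
    exact OrderDual.toDual.injective (e1.symm.trans e2)
  have hgg : ((f ^ n : End A) : A ⟶ A) ≫ ((f ^ n : End A) : A ⟶ A) =
      ((f ^ (n + n) : End A) : A ⟶ A) := (hpow n n).symm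
  apply fitting_core
  · intro T t ht
    rw [hgg] at ht
    have hfac := kernelSubobject_factors _ t ht
    rw [hker_eq] at hfac
    exact (kernelSubobject_factors_iff _ t).1 hfac
  · rw [hgg]
    exact le_of_eq him_eq
end

section
/- Let 𝒜 be an abelian category and G : 𝒜ᵒᵖ × 𝒜 ⥤ Ab an additive bifunctor with values in abelian groups such that for every object X of 𝒜, the map Hom(X,X) → Nat(G(X,-), G(X,-)) sending f to the natural transformation G(f,-) is surjective. Let A be a noetherian object of 𝒜 satisfying the descending chain condition on images of nested endomorphisms. If an additive functor F : 𝒜 ⥤ Ab is a direct summand (retract) of the functor G(A,-), then there exists a subobject B of A such that F is naturally isomorphic to G(B,-). -/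
open CategoryTheory CategoryTheory.Limits Opposite

universe w v u

/-- An object `A` of an abelian category satisfies the *descending chain condition on
images of nested endomorphisms* if every descending chain
`A = A₀ ⊇ A₁ ⊇ A₂ ⊇ …` of subobjects of `A`, in which each `Aᵢ₊₁` is the image of some
endomorphism of `Aᵢ`, stabilizes (as a chain of subobjects of `A`). -/
def DCCImagesOfNestedEndomorphisms {𝒜 : Type u} [Category.{v} 𝒜] [Abelian 𝒜] (A : 𝒜) : Prop :=
  ∀ c : ℕ → Subobject A, c 0 = ⊤ →
    (∀ i : ℕ, (c (i + 1) ≤ c i) ∧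
      ∃ g : ((c i : 𝒜) ⟶ (c i : 𝒜)),
        c (i + 1) = (Subobject.map (c i).arrow).obj (imageSubobject g)) →
    ∃ n : ℕ, ∀ m : ℕ, n ≤ m → c m = c n

section AuxLemmas

open CategoryTheory.Abelian

attribute [local instance] Pseudoelement.objectToSort Pseudoelement.homToFun

open CategoryTheory.Abelian.Pseudoelement

variable {𝒜 : Type u} [Category.{v} 𝒜] [Abelian 𝒜]

/-- Composition powers of an endomorphism. -/
def DSBFA.cpow {A : 𝒜} (f : A ⟶ A) : ℕ → (A ⟶ A)
  | 0 => 𝟙 A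
  | n + 1 => DSBFA.cpow f n ≫ f

namespace DSBFA

lemma cpow_add {A : 𝒜} (f : A ⟶ A) (a b : ℕ) :
    cpow f (a + b) = cpow f a ≫ cpow f b := by
  induction b with
  | zero => simp [cpow]
  | succ n ih => rw [show a + (n + 1) = (a + n) + 1 from rfl]; simp [cpow, ih]

lemma cpow_succ' {A : 𝒜} (f : A ⟶ A) (n : ℕ) :
    cpow f (n + 1) = f ≫ cpow f n := by
  rw [show n + 1 = 1 + n by omega, cpow_add]; simp [cpow]

omit [Abelian 𝒜] in
lemma map_mk {X Y Z : 𝒜} (g : X ⟶ Y) [Mono g] (m : Y ⟶ Z) [Mono m] :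
    (Subobject.map m).obj (Subobject.mk g) = Subobject.mk (g ≫ m) :=
  Quotient.sound ⟨MonoOver.isoMk (Iso.refl _) (by simp)⟩

lemma imageSubobject_epi_comp {W X Y : 𝒜} (e : W ⟶ X) [Epi e] (x : X ⟶ Y) :
    imageSubobject (e ≫ x) = imageSubobject x := by
  refine le_antisymm (imageSubobject_comp_le e x) ?_
  haveI := strongEpi_of_epi e
  have sq : CommSq (factorThruImageSubobject (e ≫ x)) e (imageSubobject (e ≫ x)).arrow x :=
    ⟨by simp⟩
  haveI : HasLiftingProperty e (imageSubobject (e ≫ x)).arrow := StrongEpi.llp _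
  exact imageSubobject_le x sq.lift sq.fac_right

lemma map_imageSubobject {X Y Z : 𝒜} (k : X ⟶ Y) (m : Y ⟶ Z) [Mono m] :
    (Subobject.map m).obj (imageSubobject k) = imageSubobject (k ≫ m) := by
  have h1 : k ≫ m = factorThruImageSubobject k ≫ ((imageSubobject k).arrow ≫ m) := by
    rw [← Category.assoc, imageSubobject_arrow_comp]
  rw [h1, imageSubobject_epi_comp, imageSubobject_mono ((imageSubobject k).arrow ≫ m),
    ← map_mk (imageSubobject k).arrow m, Subobject.mk_arrow]

lemma pseudo_ker {A : 𝒜} {g h : A ⟶ A}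
    (le : kernelSubobject h ≤ kernelSubobject g) (a : A) (ha : h a = 0) : g a = 0 := by
  obtain ⟨x, rfl⟩ := Quotient.exists_rep a
  rw [pseudoApply_mk'] at ha
  have hx : x.hom ≫ h = 0 := (pseudoZero_iff _).1 ha
  have harr : (kernelSubobject h).arrow ≫ g = 0 := by
    rw [← Subobject.ofLE_arrow le, Category.assoc, kernelSubobject_arrow_comp, comp_zero]
  have fac := kernelSubobject_factors h x.hom hx
  have hxg : x.hom ≫ g = 0 := by
    rw [← Subobject.factorThru_arrow _ _ fac, Category.assoc, harr, comp_zero]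
  rw [pseudoApply_mk']
  exact (pseudoZero_iff _).2 hxg

lemma pseudo_im {A : 𝒜} {g h : A ⟶ A}
    (le : imageSubobject g ≤ imageSubobject h) (a : A) : ∃ a' : A, h a' = g a := by
  obtain ⟨a', ha'⟩ := pseudo_surjective_of_epi (factorThruImageSubobject h)
      ((Subobject.ofLE _ _ le) ((factorThruImageSubobject g) a))
  refine ⟨a', ?_⟩
  have e1 : h a' = (imageSubobject h).arrow ((factorThruImageSubobject h) a') := by
    rw [← Pseudoelement.comp_apply, imageSubobject_arrow_comp]
  rw [e1, ha', ← Pseudoelement.comp_apply, Subobject.ofLE_arrow, ← Pseudoelement.comp_apply,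
    imageSubobject_arrow_comp]

/-- The Fitting-style statement: if the kernels and images of `g` stabilize when passing
to `g ≫ g`, then the induced endomorphism of the image of `g` is an isomorphism. -/
lemma isIso_arrow_comp_factorThru {A : 𝒜} {g : A ⟶ A}
    (hker : kernelSubobject (g ≫ g) ≤ kernelSubobject g)
    (him : imageSubobject g ≤ imageSubobject (g ≫ g)) :
    IsIso ((imageSubobject g).arrow ≫ factorThruImageSubobject g) := by
  set m : (imageSubobject g : 𝒜) ⟶ A := (imageSubobject g).arrow with hm
  set q : A ⟶ (imageSubobject g : 𝒜) := factorThruImageSubobject g with hq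
  have hqm : q ≫ m = g := imageSubobject_arrow_comp g
  haveI hmono : Mono (m ≫ q) := by
    apply mono_of_zero_of_map_zero
    intro b hb
    obtain ⟨a, ha⟩ := pseudo_surjective_of_epi q b
    have hga : m b = g a := by
      rw [← ha, ← Pseudoelement.comp_apply, hqm]
    have h1 : (g ≫ g) a = 0 := by
      rw [Pseudoelement.comp_apply, ← hga]
      have hz : q (m b) = 0 := by rw [← Pseudoelement.comp_apply]; exact hb
      have hz2 : (q ≫ m) (m b) = 0 := by
        rw [Pseudoelement.comp_apply, hz, apply_zero]
      rw [hqm] at hz2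
      exact hz2
    have h2 : g a = 0 := pseudo_ker hker a h1
    have h3 : m b = 0 := by rw [hga]; exact h2
    exact zero_of_map_zero m (pseudo_injective_of_mono m) b h3
  haveI hepi : Epi (m ≫ q) := by
    apply epi_of_pseudo_surjective
    intro b
    obtain ⟨a, ha⟩ := pseudo_surjective_of_epi q b
    obtain ⟨a', ha'⟩ := pseudo_im him a
    refine ⟨q a', ?_⟩
    have hga : m b = g a := by
      rw [← ha, ← Pseudoelement.comp_apply, hqm]
    have e1 : m (q (g a')) = m b := by
      rw [← Pseudoelement.comp_apply, hqm, ← Pseudoelement.comp_apply, ha', hga]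
    have e2 : q (g a') = b := pseudo_injective_of_mono m e1
    rw [Pseudoelement.comp_apply]
    rw [show m (q a') = g a' from by rw [← Pseudoelement.comp_apply, hqm]]
    exact e2
  exact isIso_of_mono_of_epi _

end DSBFA

end AuxLemmas

open DSBFA

/-- Let `G : 𝒜ᵒᵖ × 𝒜 ⥤ Ab` be an additive bifunctor (given here in curried form,
additive in each variable) such that for every object `X` every natural endomorphism of
`G(X,-)` is induced by an endomorphism of `X`.  If `A` is a noetherian object satisfying
the DCC on images of nested endomorphisms and the additive functor `F` is a direct summand
(retract) of `G(A,-)`, then `F ≅ G(B,-)` for some subobject `B` of `A`. -/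
theorem direct_summand_of_bifunctor_fixed_argument {𝒜 : Type u} [Category.{v} 𝒜] [Abelian 𝒜]
    (G : 𝒜ᵒᵖ ⥤ 𝒜 ⥤ AddCommGrpCat.{w}) [G.Additive] [∀ X : 𝒜ᵒᵖ, (G.obj X).Additive]
    (hsurj : ∀ (X : 𝒜) (η : G.obj (op X) ⟶ G.obj (op X)), ∃ f : X ⟶ X, G.map f.op = η)
    (A : 𝒜) [IsNoetherianObject A] (hdcc : DCCImagesOfNestedEndomorphisms A)
    (F : 𝒜 ⥤ AddCommGrpCat.{w}) [F.Additive]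
    (ι : F ⟶ G.obj (op A)) (π : G.obj (op A) ⟶ F) (hπι : ι ≫ π = 𝟙 F) :
    ∃ B : Subobject A, Nonempty (F ≅ G.obj (op (B : 𝒜))) := by
  obtain ⟨f, hf⟩ := hsurj A (π ≫ ι)
  have he : (π ≫ ι) ≫ (π ≫ ι) = π ≫ ι := by
    rw [Category.assoc, ← Category.assoc ι π, hπι, Category.id_comp]
  -- `G` applied to every positive power of `f` is the idempotent `π ≫ ι`.
  have hGpow : ∀ n : ℕ, G.map (cpow f (n + 1)).op = π ≫ ι := by
    intro n
    induction n with
    | zero => simpa [cpow] using hf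
    | succ n ih =>
      have : cpow f (n + 2) = cpow f (n + 1) ≫ f := rfl
      rw [this, op_comp, G.map_comp, hf, ih, he]
  -- the ascending chain of kernels stabilizes
  have kmono : Monotone fun n => kernelSubobject (cpow f n) := by
    apply monotone_nat_of_le_succ
    intro n
    simpa [cpow] using kernelSubobject_comp_le (cpow f n) f
  obtain ⟨N₁, hN₁⟩ := monotone_chain_condition_of_isNoetherianObject
    ⟨fun n => kernelSubobject (cpow f n), kmono⟩
  -- the descending chain of images stabilizes
  have cstep : ∀ n, imageSubobject (cpow f (n + 1)) ≤ imageSubobject (cpow f n) := fun n => by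
    rw [cpow_succ']
    exact imageSubobject_comp_le f (cpow f n)
  have c0 : imageSubobject (cpow f 0) = ⊤ := by
    rw [show cpow f 0 = 𝟙 A from rfl, imageSubobject_mono, ← Subobject.map_top (𝟙 A),
      Subobject.map_id]
  obtain ⟨N₂, hN₂⟩ := hdcc (fun n => imageSubobject (cpow f n)) c0 (by
    intro i
    refine ⟨cstep i, ?_⟩
    haveI := strongEpi_of_epi (factorThruImageSubobject (cpow f i))
    have sq : CommSq (factorThruImageSubobject (cpow f (i + 1)) ≫ Subobject.ofLE _ _ (cstep i))
        (factorThruImageSubobject (cpow f i)) (imageSubobject (cpow f i)).arrow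
        ((imageSubobject (cpow f i)).arrow ≫ f) := ⟨by
      rw [Category.assoc, Subobject.ofLE_arrow, imageSubobject_arrow_comp,
        ← Category.assoc, imageSubobject_arrow_comp]
      rfl⟩
    haveI : HasLiftingProperty (factorThruImageSubobject (cpow f i))
        (imageSubobject (cpow f i)).arrow := StrongEpi.llp _
    refine ⟨sq.lift, ?_⟩
    show imageSubobject (cpow f (i + 1)) = _
    rw [map_imageSubobject, sq.fac_right]
    have h2 : cpow f (i + 1) =
        factorThruImageSubobject (cpow f i) ≫ ((imageSubobject (cpow f i)).arrow ≫ f) := by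
      rw [← Category.assoc, imageSubobject_arrow_comp]; rfl
    rw [h2, imageSubobject_epi_comp])
  -- put `N := N₁ + N₂ + 1` and `g := f^N`
  set N : ℕ := N₁ + N₂ + 1 with hN
  set g : A ⟶ A := cpow f N with hgdef
  have hge : G.map g.op = π ≫ ι := hGpow (N₁ + N₂)
  have hker : kernelSubobject (g ≫ g) ≤ kernelSubobject g := by
    rw [show g ≫ g = cpow f (N + N) from (cpow_add f N N).symm]
    have e1 := hN₁ N (by omega)
    have e2 := hN₁ (N + N) (by omega)
    have : kernelSubobject (cpow f (N + N)) = kernelSubobject (cpow f N) := by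
      exact (e2.symm.trans e1 :)
    rw [this]
  have him : imageSubobject g ≤ imageSubobject (g ≫ g) := by
    rw [show g ≫ g = cpow f (N + N) from (cpow_add f N N).symm]
    have e1 := hN₂ N (by omega)
    have e2 := hN₂ (N + N) (by omega)
    have : imageSubobject (cpow f (N + N)) = imageSubobject (cpow f N) := by
      exact (e2.trans e1.symm :)
    rw [this]
  haveI hu : IsIso ((imageSubobject g).arrow ≫ factorThruImageSubobject g) :=
    isIso_arrow_comp_factorThru hker him
  set m : ((imageSubobject g : Subobject A) : 𝒜) ⟶ A := (imageSubobject g).arrow with hm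
  set q : A ⟶ ((imageSubobject g : Subobject A) : 𝒜) := factorThruImageSubobject g with hq
  have hqm : q ≫ m = g := imageSubobject_arrow_comp g
  set p₀ : G.obj (op A) ⟶ G.obj (op ((imageSubobject g : Subobject A) : 𝒜)) := G.map m.op
  set s₀ : G.obj (op ((imageSubobject g : Subobject A) : 𝒜)) ⟶ G.obj (op A) := G.map q.op
  have h_ps : p₀ ≫ s₀ = π ≫ ι := by
    rw [show p₀ ≫ s₀ = G.map ((q ≫ m).op) from by rw [op_comp, G.map_comp], hqm, hge]
  have h_sp : s₀ ≫ p₀ = G.map (m ≫ q).op := by rw [op_comp, G.map_comp]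
  haveI : IsIso (s₀ ≫ p₀) := by rw [h_sp]; infer_instance
  have hv : (s₀ ≫ p₀) ≫ (s₀ ≫ p₀) ≫ (s₀ ≫ p₀) = (s₀ ≫ p₀) ≫ (s₀ ≫ p₀) := by
    calc (s₀ ≫ p₀) ≫ (s₀ ≫ p₀) ≫ (s₀ ≫ p₀)
        = s₀ ≫ ((p₀ ≫ s₀) ≫ (p₀ ≫ s₀)) ≫ p₀ := by simp only [Category.assoc]
      _ = s₀ ≫ ((π ≫ ι) ≫ (π ≫ ι)) ≫ p₀ := by rw [h_ps]
      _ = s₀ ≫ (π ≫ ι) ≫ p₀ := by rw [he]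
      _ = (s₀ ≫ p₀) ≫ (s₀ ≫ p₀) := by rw [← h_ps]; simp only [Category.assoc]
  have hvid : s₀ ≫ p₀ = 𝟙 _ := by
    rw [← cancel_epi (s₀ ≫ p₀), ← cancel_epi (s₀ ≫ p₀), Category.comp_id]
    exact hv
  refine ⟨imageSubobject g, ⟨⟨ι ≫ p₀, s₀ ≫ π, ?_, ?_⟩⟩⟩
  · calc (ι ≫ p₀) ≫ s₀ ≫ π
        = ι ≫ (p₀ ≫ s₀) ≫ π := by simp only [Category.assoc]
      _ = (ι ≫ π) ≫ ι ≫ π := by rw [h_ps]; simp only [Category.assoc]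
      _ = 𝟙 F := by rw [hπι, Category.id_comp]
  · calc (s₀ ≫ π) ≫ ι ≫ p₀
        = s₀ ≫ (π ≫ ι) ≫ p₀ := by simp only [Category.assoc]
      _ = (s₀ ≫ p₀) ≫ s₀ ≫ p₀ := by rw [← h_ps]; simp only [Category.assoc]
      _ = 𝟙 _ := by rw [hvid, Category.id_comp]
end

section
/- Let 𝒜 be an abelian length category and G : 𝒜ᵒᵖ × 𝒜 ⥤ Ab an additive bifunctor with values in abelian groups such that for every object X of 𝒜, every natural transformation G(X,-) ⟶ G(X,-) is of the form G(f,-) for some endomorphism f of X. If an additive functor F : 𝒜 ⥤ Ab is a direct summand (retract) of G(A,-) for some object A of 𝒜, then there exists a subobject B of A such that F is naturally isomorphic to G(B,-). -/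
open CategoryTheory CategoryTheory.Limits Opposite

universe w v u

/-- Powers of an endomorphism. -/
private def fpow {𝒜 : Type u} [Category.{v} 𝒜] {A : 𝒜} (f : A ⟶ A) : ℕ → (A ⟶ A)
  | 0 => 𝟙 A
  | n + 1 => fpow f n ≫ f

private lemma fpow_add {𝒜 : Type u} [Category.{v} 𝒜] {A : 𝒜} (f : A ⟶ A) (a b : ℕ) :
    fpow f (a + b) = fpow f a ≫ fpow f b := by
  induction b with
  | zero => simp [fpow]
  | succ b ih =>
      show fpow f (a + b) ≫ f = _
      rw [ih]
      simp [fpow]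

/-- Let `𝒜` be an abelian length category (every object is both noetherian and artinian)
and `G : 𝒜ᵒᵖ × 𝒜 ⥤ Ab` an additive bifunctor (given here in curried form, additive in each
variable) such that for every object `X` every natural transformation `G(X,-) ⟶ G(X,-)` is
of the form `G(f,-)` for some endomorphism `f` of `X`.  If the additive functor `F` is a
direct summand (retract) of `G(A,-)` for an object `A`, then `F ≅ G(B,-)` for some
subobject `B` of `A`. -/
theorem direct_summand_of_bifunctor_fixed_argument_length_category
    {𝒜 : Type u} [Category.{v} 𝒜] [Abelian 𝒜]
    [∀ X : 𝒜, IsNoetherianObject X] [∀ X : 𝒜, IsArtinianObject X]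
    (G : 𝒜ᵒᵖ ⥤ 𝒜 ⥤ AddCommGrpCat.{w}) [G.Additive] [∀ X : 𝒜ᵒᵖ, (G.obj X).Additive]
    (hsurj : ∀ (X : 𝒜) (η : G.obj (op X) ⟶ G.obj (op X)), ∃ f : X ⟶ X, G.map f.op = η)
    (A : 𝒜) (F : 𝒜 ⥤ AddCommGrpCat.{w}) [F.Additive]
    (ι : F ⟶ G.obj (op A)) (π : G.obj (op A) ⟶ F) (hπι : ι ≫ π = 𝟙 F) :
    ∃ B : Subobject A, Nonempty (F ≅ G.obj (op (B : 𝒜))) := by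
  -- the idempotent on `G(A,-)`
  set e : G.obj (op A) ⟶ G.obj (op A) := π ≫ ι with he
  have hιe : ι ≫ e = ι := by rw [he, ← Category.assoc, hπι, Category.id_comp]
  have heπ : e ≫ π = π := by rw [he, Category.assoc, hπι, Category.comp_id]
  have hee : e ≫ e = e := by
    rw [he, Category.assoc, ← Category.assoc ι π, hπι, Category.id_comp]
  obtain ⟨f, hf⟩ := hsurj A e
  -- all positive powers of `f` are mapped to `e`
  have hGe : ∀ k : ℕ, G.map (fpow f (k + 1)).op = e := by
    intro k
    induction k with
    | zero => simpa [fpow] using hf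
    | succ k ih =>
        have : (fpow f (k + 1 + 1)).op = f.op ≫ (fpow f (k + 1)).op := by
          rw [show fpow f (k + 1 + 1) = fpow f (k + 1) ≫ f from rfl]
          rfl
        rw [this, G.map_comp, hf, ih, hee]
  -- the kernels of powers of `f` stabilize
  obtain ⟨N₁, hN₁⟩ := (wellFoundedGT_iff_monotone_chain_condition).1
    (inferInstance : WellFoundedGT (Subobject A))
    ⟨fun k => kernelSubobject (fpow f k), monotone_nat_of_le_succ (fun k => by
      rw [show fpow f (k + 1) = fpow f k ≫ f from rfl]
      exact kernelSubobject_comp_le (fpow f k) f)⟩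
  -- the images of powers of `f` stabilize
  obtain ⟨N₂, hN₂⟩ := (wellFoundedGT_iff_monotone_chain_condition (α := (Subobject A)ᵒᵈ)).1
    ((wellFoundedGT_dual_iff _).2 inferInstance)
    ⟨fun k => OrderDual.toDual (imageSubobject (fpow f k)),
      monotone_nat_of_le_succ (fun k => by
        show imageSubobject (fpow f (k + 1)) ≤ imageSubobject (fpow f k)
        have : fpow f (k + 1) = f ≫ fpow f k := by
          have h1 : fpow f (k + 1) = fpow f (1 + k) := by rw [Nat.add_comm]
          rw [h1, fpow_add]
          simp [fpow]
        rw [this]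
        exact imageSubobject_comp_le f (fpow f k))⟩
  set N := N₁ + N₂ with hN
  set g : A ⟶ A := fpow f (N + 1) with hg
  have hgg : g ≫ g = fpow f ((N + 1) + (N + 1)) := (fpow_add f _ _).symm
  have hGg : G.map g.op = e := hGe N
  -- stabilized kernel and image
  have hker : kernelSubobject (g ≫ g) = kernelSubobject g := by
    rw [hgg, hg]
    exact ((hN₁ (N + 1) (by omega)).symm.trans (hN₁ ((N + 1) + (N + 1)) (by omega))).symm
  have him : imageSubobject (g ≫ g) = imageSubobject g := by
    have h1 := hN₂ (N + 1) (by omega)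
    have h2 := hN₂ ((N + 1) + (N + 1)) (by omega)
    rw [hgg, hg]
    exact (OrderDual.toDual_inj.1 (h1.symm.trans h2)).symm
  -- the image factorization of `g`
  set I : Subobject A := imageSubobject g with hI
  set m : (I : 𝒜) ⟶ A := I.arrow with hm
  set p : A ⟶ (I : 𝒜) := factorThruImageSubobject g with hp
  have hpm : p ≫ m = g := imageSubobject_arrow_comp g
  set h : (I : 𝒜) ⟶ (I : 𝒜) := m ≫ p with hh
  have hhm : h ≫ m = m ≫ g := by rw [hh, Category.assoc, hpm]
  -- `h` is epi
  have hepi : Epi h := by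
    have key : p ≫ h = factorThruImageSubobject (g ≫ g) ≫
        (Subobject.isoOfEq _ _ him).hom := by
      rw [← cancel_mono m]
      have r1 : (p ≫ h) ≫ m = g ≫ g := by
        rw [Category.assoc, hhm, ← Category.assoc, hpm]
      have r2 : (factorThruImageSubobject (g ≫ g) ≫ (Subobject.isoOfEq _ _ him).hom) ≫ m
          = g ≫ g := by
        rw [Category.assoc, Subobject.isoOfEq_hom, Subobject.ofLE_arrow,
          imageSubobject_arrow_comp]
      rw [r1, r2]
    have : Epi (p ≫ h) := by
      rw [key]; exact epi_comp _ _
    exact epi_of_epi p h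
  -- `h` is mono
  have hmono : Mono h := by
    apply Abelian.mono_of_kernel_ι_eq_zero
    have hfst : Epi (pullback.fst (kernel.ι h) p) := Abelian.epi_pullback_of_epi_g _ _
    have c1 : pullback.snd (kernel.ι h) p ≫ (g ≫ g) = 0 := by
      have e1 : p ≫ h ≫ m = g ≫ g := by
        rw [hhm, ← Category.assoc p m g, hpm]
      rw [← e1, ← Category.assoc, ← pullback.condition, Category.assoc,
        ← Category.assoc (kernel.ι h) h m, kernel.condition, zero_comp, comp_zero]
    have c2 : pullback.snd (kernel.ι h) p ≫ g = 0 := by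
      have hfac := factorThruKernelSubobject_comp_arrow (g ≫ g)
        (pullback.snd (kernel.ι h) p) c1
      rw [← hfac, Category.assoc]
      have : (kernelSubobject (g ≫ g)).arrow ≫ g = 0 := by
        rw [← Subobject.ofLE_arrow hker.le, Category.assoc, kernelSubobject_arrow_comp,
          comp_zero]
      rw [this, comp_zero]
    have c3 : pullback.snd (kernel.ι h) p ≫ p = 0 := by
      rw [← cancel_mono m, Category.assoc, hpm, c2, zero_comp]
    have c4 : pullback.fst (kernel.ι h) p ≫ kernel.ι h = 0 := by
      rw [pullback.condition, c3]
    exact zero_of_epi_comp _ c4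
  haveI := hepi
  haveI := hmono
  haveI : IsIso h := isIso_of_mono_of_epi h
  -- set up the natural isomorphism
  set x : (I : 𝒜) ⟶ A := inv h ≫ m with hx
  set q : A ⟶ (I : 𝒜) := p ≫ inv h with hq
  have hmg : m ≫ g = h ≫ m := hhm.symm
  have key1 : x ≫ g ≫ q = 𝟙 (I : 𝒜) := by
    rw [hx, hq]
    calc (inv h ≫ m) ≫ g ≫ p ≫ inv h
        = inv h ≫ (m ≫ g) ≫ p ≫ inv h := by simp only [Category.assoc]
      _ = inv h ≫ (h ≫ m) ≫ p ≫ inv h := by rw [hmg]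
      _ = (inv h ≫ h) ≫ ((m ≫ p) ≫ inv h) := by simp only [Category.assoc]
      _ = 𝟙 _ := by rw [IsIso.inv_hom_id, Category.id_comp, ← hh, IsIso.hom_inv_id]
  have key2 : (q ≫ x) ≫ (g ≫ g) = g := by
    rw [hq, hx]
    calc ((p ≫ inv h) ≫ inv h ≫ m) ≫ g ≫ g
        = p ≫ inv h ≫ inv h ≫ (m ≫ g) ≫ g := by simp only [Category.assoc]
      _ = p ≫ inv h ≫ inv h ≫ (h ≫ m) ≫ g := by rw [hmg]
      _ = p ≫ inv h ≫ (inv h ≫ h) ≫ (m ≫ g) := by simp only [Category.assoc]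
      _ = p ≫ inv h ≫ (inv h ≫ h) ≫ h ≫ m := by rw [hmg]
      _ = p ≫ m := by simp
      _ = g := hpm
  set α : F ⟶ G.obj (op (I : 𝒜)) := ι ≫ G.map x.op with hα
  set β : G.obj (op (I : 𝒜)) ⟶ F := G.map q.op ≫ π with hβ
  have h5 : G.map q.op ≫ e ≫ G.map x.op = 𝟙 (G.obj (op (I : 𝒜))) := by
    have h6 := congrArg (fun t : (I : 𝒜) ⟶ (I : 𝒜) => G.map t.op) key1
    simp only [op_comp, op_id, Functor.map_comp, Functor.map_id, Category.assoc] at h6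
    rw [hGg] at h6
    rw [G.map_id] at h6
    exact h6
  have hβα : β ≫ α = 𝟙 (G.obj (op (I : 𝒜))) := by
    rw [hβ, hα]
    calc (G.map q.op ≫ π) ≫ ι ≫ G.map x.op
        = G.map q.op ≫ (π ≫ ι) ≫ G.map x.op := by simp only [Category.assoc]
      _ = 𝟙 _ := by rw [← he]; exact h5
  have h2 : e ≫ e ≫ G.map x.op ≫ G.map q.op = e := by
    have h3 := congrArg (fun t : A ⟶ A => G.map t.op) key2
    simp only [op_comp, Functor.map_comp, Category.assoc] at h3
    rw [hGg] at h3
    exact h3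
  have h4 : ι ≫ G.map x.op ≫ G.map q.op = ι ≫ e := by
    conv_rhs => rw [← h2]
    rw [← Category.assoc ι e, hιe, ← Category.assoc ι e, hιe]
  have hαβ : α ≫ β = 𝟙 F := by
    rw [hα, hβ]
    calc (ι ≫ G.map x.op) ≫ G.map q.op ≫ π
        = (ι ≫ G.map x.op ≫ G.map q.op) ≫ π := by simp only [Category.assoc]
      _ = (ι ≫ e) ≫ π := by rw [h4]
      _ = 𝟙 F := by rw [Category.assoc, heπ, hπι]
  exact ⟨I, ⟨{ hom := α, inv := β, hom_inv_id := hαβ, inv_hom_id := hβα }⟩⟩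
end
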